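/- For $(k,l)=(3,2)$: positive integers $(p,q)$ satisfy $3p^2 - 6pq + 2q^2 + 1 = 0$ if and only if $(p,q) = (r_{2n\pm 1}, r_{2n})$ for some $n \ge 0$, where $r_{-1} = r_0 = r_1 = 1$, $r_{2n+1} = 2 r_{2n} - r_{2n-1}$, $r_{2n} = 3 r_{2n-1} - r_{2n-2}$. -/

import Mathlib

theorem stmt_15 (r : ℕ → ℤ) (h0 : r 0 = 1) (h1 : r 1 = 1)
    (hodd : ∀ n, r (2 * n + 3) = 2 * r (2 * n + 2) - r (2 * n + 1))
    (heven : ∀ n, r (2 * n + 2) = 3 * r (2 * n + 1) - r (2 * n))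
    (p q : ℤ) (hp : 0 < p) (hq : 0 < q) :
    3 * p ^ 2 - 6 * p * q + 2 * q ^ 2 + 1 = 0 ↔
      ∃ n : ℕ, (p = r (2 * n + 1) ∧ q = r (2 * n)) ∨
               (p = r (2 * n - 1) ∧ q = r (2 * n)) := by
  set s : ℕ → ℤ := fun n => r (2 * n) with hs
  set x : ℕ → ℤ := fun n => r (2 * n + 1) - r (2 * n) with hx
  have hs0 : s 0 = 1 := by simp [hs, h0]
  have hx0 : x 0 = 0 := by simp [hx, h0, h1]
  have hsrec : ∀ n, s (n + 1) = 2 * s n + 3 * x n := by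
    intro n
    have h2 : 2 * (n + 1) = 2 * n + 2 := by ring
    simp only [hs, hx, h2]
    have := heven n
    linarith
  have hxrec : ∀ n, x (n + 1) = s n + 2 * x n := by
    intro n
    have h2 : 2 * (n + 1) = 2 * n + 2 := by ring
    have h3 : 2 * (n + 1) + 1 = 2 * n + 3 := by ring
    simp only [hs, hx, h2, h3]
    have := hodd n
    have := heven n
    linarith
  have hpell : ∀ n, (s n) ^ 2 - 3 * (x n) ^ 2 = 1 := by
    intro n
    induction n with
    | zero => rw [hs0, hx0]; ring
    | succ n ih => rw [hsrec, hxrec]; nlinarith [ih]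
  have hpos : ∀ n, 0 < s n ∧ 0 ≤ x n := by
    intro n
    induction n with
    | zero => rw [hs0, hx0]; norm_num
    | succ n ih => rw [hsrec, hxrec]; constructor <;> linarith [ih.1, ih.2]
  have hodd' : ∀ n, r (2 * n + 1) = s n + x n := by
    intro n; simp [hx, hs]
  have hpred : ∀ n, r (2 * n - 1) = s n - x n := by
    intro n
    match n with
    | 0 => simpa [hs0, hx0] using h0
    | (m + 1) =>
      have h2 : 2 * (m + 1) - 1 = 2 * m + 1 := by omega
      rw [h2, hodd' m, hsrec, hxrec]
      ring
  constructor
  · intro heq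
    have hpell' : q ^ 2 - 3 * (p - q) ^ 2 = 1 := by linarith [heq]; 
    have key : ∀ N : ℕ, ∀ a b : ℤ, 0 < a → 0 ≤ b → a ≤ (N : ℤ) →
        a ^ 2 - 3 * b ^ 2 = 1 → ∃ n, a = s n ∧ b = x n := by
      intro N
      induction N with
      | zero => intro a b ha _ hle _; exfalso; omega
      | succ N ih =>
        intro a b ha hb hle hPell
        rcases eq_or_lt_of_le hb with hb0 | hb1
        · have ha1 : a = 1 := by nlinarith
          exact ⟨0, by rw [hs0, hx0]; omega⟩
        · have hb1' : 1 ≤ b := hb1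
          have h1' : 3 * b < 2 * a := by nlinarith
          have h2' : a < 3 * b := by nlinarith
          have h3' : a ≤ 2 * b := by nlinarith
          obtain ⟨n, hn1, hn2⟩ := ih (2 * a - 3 * b) (2 * b - a)
            (by omega) (by omega) (by push_cast; omega)
            (by nlinarith)
          refine ⟨n + 1, ?_, ?_⟩
          · rw [hsrec]; linarith
          · rw [hxrec]; linarith
    rcases le_or_gt p q with hle | hlt
    · obtain ⟨n, hn1, hn2⟩ := key q.toNat q (q - p) hq (by omega)
        (by omega) (by linarith [hpell'])
      exact ⟨n, Or.inr ⟨by rw [hpred]; omega, by rw [hs] at hn1; exact hn1⟩⟩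
    · obtain ⟨n, hn1, hn2⟩ := key q.toNat q (p - q) hq (by omega)
        (by omega) (by linarith [hpell'])
      exact ⟨n, Or.inl ⟨by rw [hodd']; omega, by rw [hs] at hn1; exact hn1⟩⟩
  · rintro ⟨n, ⟨hp1, hq1⟩ | ⟨hp1, hq1⟩⟩ <;>
      [rw [hp1, hq1, hodd' n]; rw [hp1, hq1, hpred n]] <;>
      · have := hpell n
        simp only [hs] at *
        nlinarith [this]
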